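/- Let G be a graph, H an attachment set of even size h, and q a kernel eigenvector of G. If the alternating sum C(q) = Σ_{i=1}^{h} (-1)^i q(v_i) equals 0, then q extends to a kernel eigenvector q̃ of altan(G,H) with q̃|_{V(G)} = q and q̃(x_i) = 0 for all i. -/

import Mathlib

open scoped Classical

/-- The nullity of a graph: dimension of the kernel of its real adjacency matrix. -/
noncomputable def nullity {V : Type*} [Fintype V] (G : SimpleGraph V) : ℕ :=
  letI := Classical.decEq V
  letI := Classical.decRel G.Adj
  Module.finrank ℝ ↥(LinearMap.ker (Matrix.toLin' (G.adjMatrix ℝ)))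

/-- `q` is a kernel eigenvector of `G`: the sum of `q` over each neighbourhood is `0`. -/
def IsKernelVector {V : Type*} [Fintype V] (G : SimpleGraph V) (q : V → ℝ) : Prop :=
  ∀ v : V, ∑ u : V, (if G.Adj v u then q u else 0) = 0

/-- Underlying relation of the altan construction: vertices are `V ⊕ (Fin h ⊕ Fin h)`,
where `Sum.inr (Sum.inl i)` is `x_{i+1}` and `Sum.inr (Sum.inr i)` is `y_{i+1}`
(0-indexed versions of the 1-indexed `x_i, y_i`). -/
def altanRel {V : Type*} {h : ℕ} [NeZero h] (G : SimpleGraph V) (H : Fin h → V) :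
    (V ⊕ (Fin h ⊕ Fin h)) → (V ⊕ (Fin h ⊕ Fin h)) → Prop
  | Sum.inl u, Sum.inl w => G.Adj u w
  | Sum.inl u, Sum.inr (Sum.inl i) => u = H i
  | Sum.inr (Sum.inl i), Sum.inr (Sum.inr j) => j = i ∨ i = j + 1
  | _, _ => False

/-- The altan of `(G, H)`. -/
def altan {V : Type*} {h : ℕ} [NeZero h] (G : SimpleGraph V) (H : Fin h → V) :
    SimpleGraph (V ⊕ (Fin h ⊕ Fin h)) :=
  SimpleGraph.fromRel (altanRel G H)

/-- The special vector: `s(y_i) = (-1)^i` (1-indexed), `0` elsewhere. -/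
def specialVector (V : Type*) (h : ℕ) : (V ⊕ (Fin h ⊕ Fin h)) → ℝ
  | Sum.inr (Sum.inr j) => (-1 : ℝ) ^ ((j : ℕ) + 1)
  | _ => 0

/-- The induced attachment set `H' = (y_1, ..., y_h)` of the altan. -/
def inducedAttachment (V : Type*) (h : ℕ) : Fin h → (V ⊕ (Fin h ⊕ Fin h)) :=
  fun i => Sum.inr (Sum.inr i)

section Aux

variable {V : Type*} {h : ℕ} [NeZero h] {G : SimpleGraph V} {H : Fin h → V}

lemma altan_adj_ll {u w : V} : (altan G H).Adj (Sum.inl u) (Sum.inl w) ↔ G.Adj u w := by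
  simp only [altan, SimpleGraph.fromRel_adj, altanRel, ne_eq, Sum.inl.injEq]
  constructor
  · rintro ⟨-, hA | hA⟩
    · exact hA
    · exact hA.symm
  · intro hA
    exact ⟨hA.ne, Or.inl hA⟩

lemma altan_adj_lx {u : V} {i : Fin h} :
    (altan G H).Adj (Sum.inl u) (Sum.inr (Sum.inl i)) ↔ u = H i := by
  simp [altan, SimpleGraph.fromRel_adj, altanRel]

lemma altan_adj_ly {u : V} {j : Fin h} :
    ¬ (altan G H).Adj (Sum.inl u) (Sum.inr (Sum.inr j)) := by
  simp [altan, SimpleGraph.fromRel_adj, altanRel]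

lemma altan_adj_xl {w : V} {i : Fin h} :
    (altan G H).Adj (Sum.inr (Sum.inl i)) (Sum.inl w) ↔ w = H i := by
  rw [SimpleGraph.adj_comm]; exact altan_adj_lx

lemma altan_adj_xx {i i' : Fin h} :
    ¬ (altan G H).Adj (Sum.inr (Sum.inl i)) (Sum.inr (Sum.inl i')) := by
  simp [altan, SimpleGraph.fromRel_adj, altanRel]

lemma altan_adj_xy {i j : Fin h} :
    (altan G H).Adj (Sum.inr (Sum.inl i)) (Sum.inr (Sum.inr j)) ↔ (j = i ∨ i = j + 1) := by
  simp [altan, SimpleGraph.fromRel_adj, altanRel]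

lemma altan_adj_yl {w : V} {j : Fin h} :
    ¬ (altan G H).Adj (Sum.inr (Sum.inr j)) (Sum.inl w) := by
  rw [SimpleGraph.adj_comm]; exact altan_adj_ly

lemma altan_adj_yy {j j' : Fin h} :
    ¬ (altan G H).Adj (Sum.inr (Sum.inr j)) (Sum.inr (Sum.inr j')) := by
  simp [altan, SimpleGraph.fromRel_adj, altanRel]

end Aux


/-- for even attachment size, a kernel eigenvector `q` of `G` with vanishing
alternating sum `C(q) = Σ (-1)^i q(v_i) = 0` extends to a kernel eigenvector of the altan
that vanishes on all `x_i`. -/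
theorem stmt9 {V : Type*} [Fintype V] {h : ℕ} [NeZero h] (hh : 2 ≤ h) (heven : Even h)
    (G : SimpleGraph V) (H : Fin h → V) (q : V → ℝ)
    (hq : IsKernelVector G q)
    (hC : ∑ i : Fin h, (-1 : ℝ) ^ ((i : ℕ) + 1) * q (H i) = 0) :
    ∃ q' : (V ⊕ (Fin h ⊕ Fin h)) → ℝ,
      IsKernelVector (altan G H) q' ∧ (∀ u : V, q' (Sum.inl u) = q u) ∧
        ∀ i : Fin h, q' (Sum.inr (Sum.inl i)) = 0 := by
  classical
  set c : Fin h → ℝ := fun i =>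
    ∑ k : Fin h, if (k : ℕ) ≤ (i : ℕ) then (-1 : ℝ) ^ ((i : ℕ) + (k : ℕ) + 1) * q (H k) else 0
    with hcdef
  have hone : ((1 : Fin h) : ℕ) = 1 := by
    rw [Fin.val_one' h, Nat.mod_eq_of_lt (by omega)]
  -- c 0 = - q (H 0)
  have hc0 : c 0 = - q (H 0) := by
    simp only [hcdef]
    rw [Finset.sum_eq_single (0 : Fin h)]
    · simp
    · intro k _ hk
      rw [if_neg]
      intro hle
      exact hk (Fin.ext (by simpa using hle))
    · simp
  -- key recurrence
  have key : ∀ j : Fin h, c (j + 1) + c j = - q (H (j + 1)) := by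
    intro j
    have hvadd : ((j + 1 : Fin h) : ℕ) = ((j : ℕ) + 1) % h := by
      rw [Fin.add_def, hone]
    rcases lt_or_eq_of_le (Nat.succ_le_of_lt j.isLt) with hlt | heq
    · have hval' : ((j + 1 : Fin h) : ℕ) = (j : ℕ) + 1 := by
        rw [hvadd, Nat.mod_eq_of_lt hlt]
      have hsum : c (j + 1) + c j = ∑ k : Fin h, (if k = j + 1 then -q (H k) else 0) := by
        simp only [hcdef]
        rw [← Finset.sum_add_distrib]
        apply Finset.sum_congr rfl
        intro k _
        simp only [hval']
        by_cases h1 : (k : ℕ) ≤ (j : ℕ)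
        · have hk1 : (k : ℕ) ≤ (j : ℕ) + 1 := by omega
          have hkne : k ≠ j + 1 := by
            intro hEq
            have := congrArg Fin.val hEq
            rw [hval'] at this; omega
          rw [if_pos hk1, if_pos h1, if_neg hkne]
          have hexp : (j : ℕ) + 1 + (k : ℕ) + 1 = ((j : ℕ) + (k : ℕ) + 1) + 1 := by omega
          rw [hexp, pow_succ]
          ring
        · by_cases h2 : (k : ℕ) ≤ (j : ℕ) + 1
          · have hk : (k : ℕ) = (j : ℕ) + 1 := by omega
            have hkeq : k = j + 1 := Fin.ext (by rw [hval', hk])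
            rw [if_pos h2, if_neg h1, if_pos hkeq]
            have hodd : Odd ((j : ℕ) + 1 + (k : ℕ) + 1) := ⟨(j : ℕ) + 1, by omega⟩
            rw [hodd.neg_one_pow]
            ring
          · have hkne : k ≠ j + 1 := by
              intro hEq
              have := congrArg Fin.val hEq
              rw [hval'] at this; omega
            rw [if_neg h2, if_neg h1, if_neg hkne]
            ring
      rw [hsum, Finset.sum_ite_eq' Finset.univ (j + 1) (fun k => -q (H k))]
      simp
    · -- j is the last index: j + 1 = 0
      have hsucc : (j : ℕ) + 1 = h := by omega
      have hj1 : j + 1 = 0 := Fin.ext (by rw [hvadd, hsucc, Nat.mod_self, Fin.val_zero])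
      have hcj : c j = 0 := by
        simp only [hcdef]
        have : ∀ k : Fin h, (if (k : ℕ) ≤ (j : ℕ) then (-1 : ℝ) ^ ((j : ℕ) + (k : ℕ) + 1) * q (H k) else 0)
            = -((-1 : ℝ) ^ ((k : ℕ) + 1) * q (H k)) := by
          intro k
          rw [if_pos (by have := k.isLt; omega)]
          have hexp : (j : ℕ) + (k : ℕ) + 1 = h + (k : ℕ) := by omega
          rw [hexp, pow_add, heven.neg_one_pow, one_mul, pow_succ]
          ring
        simp only [this]
        rw [Finset.sum_neg_distrib, hC, neg_zero]
      rw [hj1, hc0, hcj, add_zero]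
  -- the extension
  refine ⟨Sum.elim q (Sum.elim (fun _ : Fin h => (0:ℝ)) c), ?_, fun u => rfl, fun i => rfl⟩
  intro v
  rcases v with u | i | j
  · -- original vertex
    rw [Fintype.sum_sum_type, Fintype.sum_sum_type]
    have h1 : ∑ w : V, (if (altan G H).Adj (Sum.inl u) (Sum.inl w) then
        Sum.elim q (Sum.elim (fun _ : Fin h => (0:ℝ)) c) (Sum.inl w) else 0) = 0 :=
      (Finset.sum_congr rfl fun w _ => if_congr altan_adj_ll rfl rfl).trans (hq u)
    have h2 : ∑ i : Fin h, (if (altan G H).Adj (Sum.inl u) (Sum.inr (Sum.inl i)) then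
        Sum.elim q (Sum.elim (fun _ : Fin h => (0:ℝ)) c) (Sum.inr (Sum.inl i)) else 0) = 0 := by
      apply Finset.sum_eq_zero
      intro i _
      simp
    have h3 : ∑ j : Fin h, (if (altan G H).Adj (Sum.inl u) (Sum.inr (Sum.inr j)) then
        Sum.elim q (Sum.elim (fun _ : Fin h => (0:ℝ)) c) (Sum.inr (Sum.inr j)) else 0) = 0 := by
      apply Finset.sum_eq_zero
      intro j _
      rw [if_neg altan_adj_ly]
    rw [h1, h2, h3]
    ring
  · -- x_i
    rw [Fintype.sum_sum_type, Fintype.sum_sum_type]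
    have h1 : ∑ w : V, (if (altan G H).Adj (Sum.inr (Sum.inl i)) (Sum.inl w) then
        Sum.elim q (Sum.elim (fun _ : Fin h => (0:ℝ)) c) (Sum.inl w) else 0) = q (H i) := by
      have : ∀ w : V, (if (altan G H).Adj (Sum.inr (Sum.inl i)) (Sum.inl w) then
          Sum.elim q (Sum.elim (fun _ : Fin h => (0:ℝ)) c) (Sum.inl w) else 0) = (if w = H i then q w else 0) := by
        intro w
        simp only [Sum.elim_inl]
        exact if_congr altan_adj_xl rfl rfl
      simp only [this]
      rw [Finset.sum_ite_eq' Finset.univ (H i) q]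
      simp
    have hne : i ≠ i - 1 := by
      intro hEq
      have h2 : i - 1 + 1 = i := by abel
      have h3 : i + 1 = i := by nth_rewrite 1 [hEq]; exact h2
      have h4 : (1 : Fin h) = 0 := by
        have := congrArg (fun z => z - i) h3
        simpa using this
      have h5 := congrArg Fin.val h4
      rw [hone] at h5
      simp at h5
    have h3 : ∑ j : Fin h, (if (altan G H).Adj (Sum.inr (Sum.inl i)) (Sum.inr (Sum.inr j)) then
        Sum.elim q (Sum.elim (fun _ : Fin h => (0:ℝ)) c) (Sum.inr (Sum.inr j)) else 0) = c i + c (i - 1) := by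
      have hcond : ∀ j : Fin h,
          ((altan G H).Adj (Sum.inr (Sum.inl i)) (Sum.inr (Sum.inr j))) ↔ (j = i ∨ j = i - 1) := by
        intro j
        rw [altan_adj_xy]
        constructor
        · rintro (rfl | rfl)
          · exact Or.inl rfl
          · exact Or.inr (by abel)
        · rintro (rfl | rfl)
          · exact Or.inl rfl
          · exact Or.inr (by abel)
      have : ∀ j : Fin h, (if (altan G H).Adj (Sum.inr (Sum.inl i)) (Sum.inr (Sum.inr j)) then
          Sum.elim q (Sum.elim (fun _ : Fin h => (0:ℝ)) c) (Sum.inr (Sum.inr j)) else 0)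
          = (if j = i then c j else 0) + (if j = i - 1 then c j else 0) := by
        intro j
        simp only [Sum.elim_inr]
        rw [if_congr (hcond j) rfl rfl]
        by_cases hj1 : j = i
        · subst hj1
          rw [if_pos (Or.inl rfl), if_pos rfl, if_neg hne, add_zero]
        · by_cases hj2 : j = i - 1
          · subst hj2
            rw [if_pos (Or.inr rfl), if_neg hj1, if_pos rfl, zero_add]
          · rw [if_neg (by tauto), if_neg hj1, if_neg hj2, add_zero]
      simp only [this]
      rw [Finset.sum_add_distrib, Finset.sum_ite_eq' Finset.univ i c,
        Finset.sum_ite_eq' Finset.univ (i - 1) c]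
      simp
    rw [h1, h3]
    have hkey := key (i - 1)
    have hsub : i - 1 + 1 = i := by abel
    rw [hsub] at hkey
    have : ∑ i' : Fin h, (if (altan G H).Adj (Sum.inr (Sum.inl i)) (Sum.inr (Sum.inl i')) then
        Sum.elim q (Sum.elim (fun _ : Fin h => (0:ℝ)) c) (Sum.inr (Sum.inl i')) else 0) = 0 := by
      apply Finset.sum_eq_zero
      intro i' _
      rw [if_neg altan_adj_xx]
    rw [this]
    linarith
  · -- y_j
    rw [Fintype.sum_sum_type, Fintype.sum_sum_type]
    have h1 : ∑ w : V, (if (altan G H).Adj (Sum.inr (Sum.inr j)) (Sum.inl w) then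
        Sum.elim q (Sum.elim (fun _ : Fin h => (0:ℝ)) c) (Sum.inl w) else 0) = 0 := by
      apply Finset.sum_eq_zero
      intro w _
      rw [if_neg altan_adj_yl]
    have h2 : ∑ i : Fin h, (if (altan G H).Adj (Sum.inr (Sum.inr j)) (Sum.inr (Sum.inl i)) then
        Sum.elim q (Sum.elim (fun _ : Fin h => (0:ℝ)) c) (Sum.inr (Sum.inl i)) else 0) = 0 := by
      apply Finset.sum_eq_zero
      intro i _
      simp
    have h3 : ∑ j' : Fin h, (if (altan G H).Adj (Sum.inr (Sum.inr j)) (Sum.inr (Sum.inr j')) then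
        Sum.elim q (Sum.elim (fun _ : Fin h => (0:ℝ)) c) (Sum.inr (Sum.inr j')) else 0) = 0 := by
      apply Finset.sum_eq_zero
      intro j' _
      rw [if_neg altan_adj_yy]
    rw [h1, h2, h3]
    ring
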